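/- Let T ⊂ ℤ¹⁶ be the set consisting of the vectors e₀ − e₁ − e₁₀ − e₁₁ − e₁₂ − e₁₃ − e₁₄ − e₁₅ − eᵢ (2 ≤ i ≤ 6), e₀ − eᵢ − e_j (2 ≤ i < j ≤ 6), eᵢ − e₁ − e₁₀ − e₁₁ − e₁₂ − e₁₃ − e₁₄ − e₁₅ (2 ≤ i ≤ 6), and eᵢ − e_j (2 ≤ i, j ≤ 6, i ≠ j), and equip ℤ¹⁶ with the form ⟨x,y⟩ = −Σᵢ xᵢyᵢ. Then: (a) there is no 6-tuple (v₁,…,v₆) ∈ T⁶ with ⟨v₁,v₁⟩ = −9, ⟨vᵢ,vᵢ⟩ = −2 for 2 ≤ i ≤ 6, ⟨vᵢ,vᵢ₊₁⟩ = 1 for 1 ≤ i ≤ 5, and ⟨vᵢ,v_j⟩ = 0 whenever |i−j| ≥ 2; (b) there is no 6-tuple (v₁,…,v₆) ∈ T⁶ with self-pairings (⟨v₁,v₁⟩,…,⟨v₆,v₆⟩) = (−2,−8,−2,−2,−2,−3), ⟨vᵢ,vᵢ₊₁⟩ = 1 for 1 ≤ i ≤ 5, and ⟨vᵢ,v_j⟩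 = 0 whenever |i−j| ≥ 2. -/

import Mathlib

set_option maxHeartbeats 4000000
set_option maxRecDepth 10000


/-- The standard basis vector `eᵢ` of `ℤ¹⁶`. -/
def E16 (i : Fin 16) : Fin 16 → ℤ := Pi.single i 1

/-- The negative definite form `⟨x,y⟩ = −Σᵢ xᵢyᵢ` on `ℤ¹⁶`. -/
def F16 (x y : Fin 16 → ℤ) : ℤ := -∑ i : Fin 16, x i * y i

/-- The set `T` of classes in the filling `W₆` representable by symplectic spheres. -/
def W6classes : Set (Fin 16 → ℤ) :=
  {v | (∃ i : Fin 16, 2 ≤ i ∧ i ≤ 6 ∧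
          v = E16 0 - E16 1 - E16 10 - E16 11 - E16 12 - E16 13 - E16 14 - E16 15 - E16 i) ∨
       (∃ i j : Fin 16, 2 ≤ i ∧ i < j ∧ j ≤ 6 ∧ v = E16 0 - E16 i - E16 j) ∨
       (∃ i : Fin 16, 2 ≤ i ∧ i ≤ 6 ∧
          v = E16 i - E16 1 - E16 10 - E16 11 - E16 12 - E16 13 - E16 14 - E16 15) ∨
       (∃ i j : Fin 16, 2 ≤ i ∧ i ≤ 6 ∧ 2 ≤ j ∧ j ≤ 6 ∧ i ≠ j ∧ v = E16 i - E16 j)}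

def tvf : Fin 40 → (Fin 16 → ℤ) :=
  ![E16 0 - E16 1 - E16 10 - E16 11 - E16 12 - E16 13 - E16 14 - E16 15 - E16 2,
    E16 0 - E16 1 - E16 10 - E16 11 - E16 12 - E16 13 - E16 14 - E16 15 - E16 3,
    E16 0 - E16 1 - E16 10 - E16 11 - E16 12 - E16 13 - E16 14 - E16 15 - E16 4,
    E16 0 - E16 1 - E16 10 - E16 11 - E16 12 - E16 13 - E16 14 - E16 15 - E16 5,
    E16 0 - E16 1 - E16 10 - E16 11 - E16 12 - E16 13 - E16 14 - E16 15 - E16 6,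
    E16 0 - E16 2 - E16 3,
    E16 0 - E16 2 - E16 4,
    E16 0 - E16 2 - E16 5,
    E16 0 - E16 2 - E16 6,
    E16 0 - E16 3 - E16 4,
    E16 0 - E16 3 - E16 5,
    E16 0 - E16 3 - E16 6,
    E16 0 - E16 4 - E16 5,
    E16 0 - E16 4 - E16 6,
    E16 0 - E16 5 - E16 6,
    E16 2 - E16 1 - E16 10 - E16 11 - E16 12 - E16 13 - E16 14 - E16 15,
    E16 3 - E16 1 - E16 10 - E16 11 - E16 12 - E16 13 - E16 14 - E16 15,
    E16 4 - E16 1 - E16 10 - E16 11 - E16 12 - E16 13 - E16 14 - E16 15,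
    E16 5 - E16 1 - E16 10 - E16 11 - E16 12 - E16 13 - E16 14 - E16 15,
    E16 6 - E16 1 - E16 10 - E16 11 - E16 12 - E16 13 - E16 14 - E16 15,
    E16 2 - E16 3,
    E16 2 - E16 4,
    E16 2 - E16 5,
    E16 2 - E16 6,
    E16 3 - E16 2,
    E16 3 - E16 4,
    E16 3 - E16 5,
    E16 3 - E16 6,
    E16 4 - E16 2,
    E16 4 - E16 3,
    E16 4 - E16 5,
    E16 4 - E16 6,
    E16 5 - E16 2,
    E16 5 - E16 3,
    E16 5 - E16 4,
    E16 5 - E16 6,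
    E16 6 - E16 2,
    E16 6 - E16 3,
    E16 6 - E16 4,
    E16 6 - E16 5]

def Gm : Fin 40 → Fin 40 → ℤ :=
  ![![-9, -8, -8, -8, -8, -2, -2, -2, -2, -1, -1, -1, -1, -1, -1, -6, -7, -7, -7, -7, 1, 1, 1, 1, -1, 0, 0, 0, -1, 0, 0, 0, -1, 0, 0, 0, -1, 0, 0, 0],
    ![-8, -9, -8, -8, -8, -2, -1, -1, -1, -2, -2, -2, -1, -1, -1, -7, -6, -7, -7, -7, -1, 0, 0, 0, 1, 1, 1, 1, 0, -1, 0, 0, 0, -1, 0, 0, 0, -1, 0, 0],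
    ![-8, -8, -9, -8, -8, -1, -2, -1, -1, -2, -1, -1, -2, -2, -1, -7, -7, -6, -7, -7, 0, -1, 0, 0, 0, -1, 0, 0, 1, 1, 1, 1, 0, 0, -1, 0, 0, 0, -1, 0],
    ![-8, -8, -8, -9, -8, -1, -1, -2, -1, -1, -2, -1, -2, -1, -2, -7, -7, -7, -6, -7, 0, 0, -1, 0, 0, 0, -1, 0, 0, 0, -1, 0, 1, 1, 1, 1, 0, 0, 0, -1],
    ![-8, -8, -8, -8, -9, -1, -1, -1, -2, -1, -1, -2, -1, -2, -2, -7, -7, -7, -7, -6, 0, 0, 0, -1, 0, 0, 0, -1, 0, 0, 0, -1, 0, 0, 0, -1, 1, 1, 1, 1],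
    ![-2, -2, -1, -1, -1, -3, -2, -2, -2, -2, -2, -2, -1, -1, -1, 1, 1, 0, 0, 0, 0, 1, 1, 1, 0, 1, 1, 1, -1, -1, 0, 0, -1, -1, 0, 0, -1, -1, 0, 0],
    ![-2, -1, -2, -1, -1, -2, -3, -2, -2, -2, -1, -1, -2, -2, -1, 1, 0, 1, 0, 0, 1, 0, 1, 1, -1, -1, 0, 0, 0, 1, 1, 1, -1, 0, -1, 0, -1, 0, -1, 0],
    ![-2, -1, -1, -2, -1, -2, -2, -3, -2, -1, -2, -1, -2, -1, -2, 1, 0, 0, 1, 0, 1, 1, 0, 1, -1, 0, -1, 0, -1, 0, -1, 0, 0, 1, 1, 1, -1, 0, 0, -1],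
    ![-2, -1, -1, -1, -2, -2, -2, -2, -3, -1, -1, -2, -1, -2, -2, 1, 0, 0, 0, 1, 1, 1, 1, 0, -1, 0, 0, -1, -1, 0, 0, -1, -1, 0, 0, -1, 0, 1, 1, 1],
    ![-1, -2, -2, -1, -1, -2, -2, -1, -1, -3, -2, -2, -2, -2, -1, 0, 1, 1, 0, 0, -1, -1, 0, 0, 1, 0, 1, 1, 1, 0, 1, 1, 0, -1, -1, 0, 0, -1, -1, 0],
    ![-1, -2, -1, -2, -1, -2, -1, -2, -1, -2, -3, -2, -2, -1, -2, 0, 1, 0, 1, 0, -1, 0, -1, 0, 1, 1, 0, 1, 0, -1, -1, 0, 1, 0, 1, 1, 0, -1, 0, -1],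
    ![-1, -2, -1, -1, -2, -2, -1, -1, -2, -2, -2, -3, -1, -2, -2, 0, 1, 0, 0, 1, -1, 0, 0, -1, 1, 1, 1, 0, 0, -1, 0, -1, 0, -1, 0, -1, 1, 0, 1, 1],
    ![-1, -1, -2, -2, -1, -1, -2, -2, -1, -2, -2, -1, -3, -2, -2, 0, 0, 1, 1, 0, 0, -1, -1, 0, 0, -1, -1, 0, 1, 1, 0, 1, 1, 1, 0, 1, 0, 0, -1, -1],
    ![-1, -1, -2, -1, -2, -1, -2, -1, -2, -2, -1, -2, -2, -3, -2, 0, 0, 1, 0, 1, 0, -1, 0, -1, 0, -1, 0, -1, 1, 1, 1, 0, 0, 0, -1, -1, 1, 1, 0, 1],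
    ![-1, -1, -1, -2, -2, -1, -1, -2, -2, -1, -2, -2, -2, -2, -3, 0, 0, 0, 1, 1, 0, 0, -1, -1, 0, 0, -1, -1, 0, 0, -1, -1, 1, 1, 1, 0, 1, 1, 1, 0],
    ![-6, -7, -7, -7, -7, 1, 1, 1, 1, 0, 0, 0, 0, 0, 0, -8, -7, -7, -7, -7, -1, -1, -1, -1, 1, 0, 0, 0, 1, 0, 0, 0, 1, 0, 0, 0, 1, 0, 0, 0],
    ![-7, -6, -7, -7, -7, 1, 0, 0, 0, 1, 1, 1, 0, 0, 0, -7, -8, -7, -7, -7, 1, 0, 0, 0, -1, -1, -1, -1, 0, 1, 0, 0, 0, 1, 0, 0, 0, 1, 0, 0],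
    ![-7, -7, -6, -7, -7, 0, 1, 0, 0, 1, 0, 0, 1, 1, 0, -7, -7, -8, -7, -7, 0, 1, 0, 0, 0, 1, 0, 0, -1, -1, -1, -1, 0, 0, 1, 0, 0, 0, 1, 0],
    ![-7, -7, -7, -6, -7, 0, 0, 1, 0, 0, 1, 0, 1, 0, 1, -7, -7, -7, -8, -7, 0, 0, 1, 0, 0, 0, 1, 0, 0, 0, 1, 0, -1, -1, -1, -1, 0, 0, 0, 1],
    ![-7, -7, -7, -7, -6, 0, 0, 0, 1, 0, 0, 1, 0, 1, 1, -7, -7, -7, -7, -8, 0, 0, 0, 1, 0, 0, 0, 1, 0, 0, 0, 1, 0, 0, 0, 1, -1, -1, -1, -1],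
    ![1, -1, 0, 0, 0, 0, 1, 1, 1, -1, -1, -1, 0, 0, 0, -1, 1, 0, 0, 0, -2, -1, -1, -1, 2, 1, 1, 1, 1, -1, 0, 0, 1, -1, 0, 0, 1, -1, 0, 0],
    ![1, 0, -1, 0, 0, 1, 0, 1, 1, -1, 0, 0, -1, -1, 0, -1, 0, 1, 0, 0, -1, -2, -1, -1, 1, -1, 0, 0, 2, 1, 1, 1, 1, 0, -1, 0, 1, 0, -1, 0],
    ![1, 0, 0, -1, 0, 1, 1, 0, 1, 0, -1, 0, -1, 0, -1, -1, 0, 0, 1, 0, -1, -1, -2, -1, 1, 0, -1, 0, 1, 0, -1, 0, 2, 1, 1, 1, 1, 0, 0, -1],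
    ![1, 0, 0, 0, -1, 1, 1, 1, 0, 0, 0, -1, 0, -1, -1, -1, 0, 0, 0, 1, -1, -1, -1, -2, 1, 0, 0, -1, 1, 0, 0, -1, 1, 0, 0, -1, 2, 1, 1, 1],
    ![-1, 1, 0, 0, 0, 0, -1, -1, -1, 1, 1, 1, 0, 0, 0, 1, -1, 0, 0, 0, 2, 1, 1, 1, -2, -1, -1, -1, -1, 1, 0, 0, -1, 1, 0, 0, -1, 1, 0, 0],
    ![0, 1, -1, 0, 0, 1, -1, 0, 0, 0, 1, 1, -1, -1, 0, 0, -1, 1, 0, 0, 1, -1, 0, 0, -1, -2, -1, -1, 1, 2, 1, 1, 0, 1, -1, 0, 0, 1, -1, 0],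
    ![0, 1, 0, -1, 0, 1, 0, -1, 0, 1, 0, 1, -1, 0, -1, 0, -1, 0, 1, 0, 1, 0, -1, 0, -1, -1, -2, -1, 0, 1, -1, 0, 1, 2, 1, 1, 0, 1, 0, -1],
    ![0, 1, 0, 0, -1, 1, 0, 0, -1, 1, 1, 0, 0, -1, -1, 0, -1, 0, 0, 1, 1, 0, 0, -1, -1, -1, -1, -2, 0, 1, 0, -1, 0, 1, 0, -1, 1, 2, 1, 1],
    ![-1, 0, 1, 0, 0, -1, 0, -1, -1, 1, 0, 0, 1, 1, 0, 1, 0, -1, 0, 0, 1, 2, 1, 1, -1, 1, 0, 0, -2, -1, -1, -1, -1, 0, 1, 0, -1, 0, 1, 0],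
    ![0, -1, 1, 0, 0, -1, 1, 0, 0, 0, -1, -1, 1, 1, 0, 0, 1, -1, 0, 0, -1, 1, 0, 0, 1, 2, 1, 1, -1, -2, -1, -1, 0, -1, 1, 0, 0, -1, 1, 0],
    ![0, 0, 1, -1, 0, 0, 1, -1, 0, 1, -1, 0, 0, 1, -1, 0, 0, -1, 1, 0, 0, 1, -1, 0, 0, 1, -1, 0, -1, -1, -2, -1, 1, 1, 2, 1, 0, 0, 1, -1],
    ![0, 0, 1, 0, -1, 0, 1, 0, -1, 1, 0, -1, 1, 0, -1, 0, 0, -1, 0, 1, 0, 1, 0, -1, 0, 1, 0, -1, -1, -1, -1, -2, 0, 0, 1, -1, 1, 1, 2, 1],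
    ![-1, 0, 0, 1, 0, -1, -1, 0, -1, 0, 1, 0, 1, 0, 1, 1, 0, 0, -1, 0, 1, 1, 2, 1, -1, 0, 1, 0, -1, 0, 1, 0, -2, -1, -1, -1, -1, 0, 0, 1],
    ![0, -1, 0, 1, 0, -1, 0, 1, 0, -1, 0, -1, 1, 0, 1, 0, 1, 0, -1, 0, -1, 0, 1, 0, 1, 1, 2, 1, 0, -1, 1, 0, -1, -2, -1, -1, 0, -1, 0, 1],
    ![0, 0, -1, 1, 0, 0, -1, 1, 0, -1, 1, 0, 0, -1, 1, 0, 0, 1, -1, 0, 0, -1, 1, 0, 0, -1, 1, 0, 1, 1, 2, 1, -1, -1, -2, -1, 0, 0, -1, 1],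
    ![0, 0, 0, 1, -1, 0, 0, 1, -1, 0, 1, -1, 1, -1, 0, 0, 0, 0, -1, 1, 0, 0, 1, -1, 0, 0, 1, -1, 0, 0, 1, -1, -1, -1, -1, -2, 1, 1, 1, 2],
    ![-1, 0, 0, 0, 1, -1, -1, -1, 0, 0, 0, 1, 0, 1, 1, 1, 0, 0, 0, -1, 1, 1, 1, 2, -1, 0, 0, 1, -1, 0, 0, 1, -1, 0, 0, 1, -2, -1, -1, -1],
    ![0, -1, 0, 0, 1, -1, 0, 0, 1, -1, -1, 0, 0, 1, 1, 0, 1, 0, 0, -1, -1, 0, 0, 1, 1, 1, 1, 2, 0, -1, 0, 1, 0, -1, 0, 1, -1, -2, -1, -1],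
    ![0, 0, -1, 0, 1, 0, -1, 0, 1, -1, 0, 1, -1, 0, 1, 0, 0, 1, 0, -1, 0, -1, 0, 1, 0, -1, 0, 1, 1, 1, 1, 2, 0, 0, -1, 1, -1, -1, -2, -1],
    ![0, 0, 0, -1, 1, 0, 0, -1, 1, 0, -1, 1, -1, 1, 0, 0, 0, 0, 1, -1, 0, 0, -1, 1, 0, 0, -1, 1, 0, 0, -1, 1, 1, 1, 1, 2, -1, -1, -1, -2]]

lemma F16_comm (x y : Fin 16 → ℤ) : F16 x y = F16 y x := by
  simp [F16, mul_comm]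

lemma mem_tvf {x : Fin 16 → ℤ} (hx : x ∈ W6classes) : ∃ a : Fin 40, x = tvf a := by
  rcases hx with ⟨i, h1, h2, rfl⟩ | ⟨i, j, h1, h2, h3, rfl⟩ | ⟨i, h1, h2, rfl⟩ | ⟨i, j, h1, h2, h3, h4, h5, rfl⟩
  · exact (by decide : ∀ i : Fin 16, 2 ≤ i → i ≤ 6 → ∃ a : Fin 40,
      E16 0 - E16 1 - E16 10 - E16 11 - E16 12 - E16 13 - E16 14 - E16 15 - E16 i = tvf a) i h1 h2
  · exact (by decide : ∀ i j : Fin 16, 2 ≤ i → i < j → j ≤ 6 → ∃ a : Fin 40,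
      E16 0 - E16 i - E16 j = tvf a) i j h1 h2 h3
  · exact (by decide : ∀ i : Fin 16, 2 ≤ i → i ≤ 6 → ∃ a : Fin 40,
      E16 i - E16 1 - E16 10 - E16 11 - E16 12 - E16 13 - E16 14 - E16 15 = tvf a) i h1 h2
  · exact (by decide : ∀ i j : Fin 16, 2 ≤ i → i ≤ 6 → 2 ≤ j → j ≤ 6 → i ≠ j → ∃ a : Fin 40,
      E16 i - E16 j = tvf a) i j h1 h2 h3 h4 h5

lemma GmF : ∀ a b : Fin 40, F16 (tvf a) (tvf b) = Gm a b := by decide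

def okConsI (w : Fin 40) (c : List (Fin 40)) : Bool :=
  match c with
  | [] => true
  | x :: r => (Gm w x == 1) && r.all (fun y => Gm w y == 0)

def stepI (d : ℤ) (acc : List (List (Fin 40))) : List (List (Fin 40)) :=
  acc.flatMap (fun c => ((List.finRange 40).filter
    (fun w => (Gm w w == d) && okConsI w c)).map (· :: c))

def buildI (pat : List ℤ) : List (List (Fin 40)) := pat.foldl (fun acc d => stepI d acc) [[]]

lemma mem_stepI {w : Fin 40} {c : List (Fin 40)} {acc : List (List (Fin 40))} {d : ℤ}
    (hc : c ∈ acc) (hd : Gm w w = d) (hok : okConsI w c = true) :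
    (w :: c) ∈ stepI d acc := by
  unfold stepI
  refine List.mem_flatMap.mpr ⟨c, hc, ?_⟩
  refine List.mem_map.mpr ⟨w, ?_, rfl⟩
  refine List.mem_filter.mpr ⟨List.mem_finRange w, ?_⟩
  simp [hd, hok]

lemma buildIA : buildI [-9,-2,-2,-2,-2,-2] = [] := by decide
lemma buildIB : buildI [-2,-8,-2,-2,-2,-3] = [] := by decide

lemma partA :
    (¬ ∃ v : Fin 6 → (Fin 16 → ℤ),
        (∀ i, v i ∈ W6classes) ∧
        F16 (v 0) (v 0) = -9 ∧
        (∀ i : Fin 6, i ≠ 0 → F16 (v i) (v i) = -2) ∧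
        (∀ i : Fin 5, F16 (v i.castSucc) (v i.succ) = 1) ∧
        (∀ i j : Fin 6, ((i : ℕ) + 2 ≤ (j : ℕ) ∨ (j : ℕ) + 2 ≤ (i : ℕ)) →
          F16 (v i) (v j) = 0)) := by
  rintro ⟨v, hmem, h9, h2n, hadj, hfar⟩
  choose a ha using fun i => mem_tvf (hmem i)
  have g : ∀ i j : Fin 6, Gm (a i) (a j) = F16 (v i) (v j) := by
    intro i j; rw [ha i, ha j, GmF]
  have adj : ∀ k : Fin 5, Gm (a k.succ) (a k.castSucc) = 1 := by
    intro k; rw [g, F16_comm]; exact hadj k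
  have far : ∀ i j : Fin 6, ((j : ℕ) + 2 ≤ (i : ℕ)) → Gm (a i) (a j) = 0 := by
    intro i j h; rw [g]; exact hfar i j (Or.inr h)
  have a10 : Gm (a 1) (a 0) = 1 := adj 0
  have a21 : Gm (a 2) (a 1) = 1 := adj 1
  have a32 : Gm (a 3) (a 2) = 1 := adj 2
  have a43 : Gm (a 4) (a 3) = 1 := adj 3
  have a54 : Gm (a 5) (a 4) = 1 := adj 4
  have f20 : Gm (a 2) (a 0) = 0 := far 2 0 (by decide)
  have f30 : Gm (a 3) (a 0) = 0 := far 3 0 (by decide)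
  have f31 : Gm (a 3) (a 1) = 0 := far 3 1 (by decide)
  have f40 : Gm (a 4) (a 0) = 0 := far 4 0 (by decide)
  have f41 : Gm (a 4) (a 1) = 0 := far 4 1 (by decide)
  have f42 : Gm (a 4) (a 2) = 0 := far 4 2 (by decide)
  have f50 : Gm (a 5) (a 0) = 0 := far 5 0 (by decide)
  have f51 : Gm (a 5) (a 1) = 0 := far 5 1 (by decide)
  have f52 : Gm (a 5) (a 2) = 0 := far 5 2 (by decide)
  have f53 : Gm (a 5) (a 3) = 0 := far 5 3 (by decide)
  have hb : [a 5, a 4, a 3, a 2, a 1, a 0] ∈ buildI [-9,-2,-2,-2,-2,-2] := by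
    show [a 5, a 4, a 3, a 2, a 1, a 0] ∈
      stepI (-2) (stepI (-2) (stepI (-2) (stepI (-2) (stepI (-2) (stepI (-9) [[]])))))
    refine mem_stepI (mem_stepI (mem_stepI (mem_stepI (mem_stepI (mem_stepI
      (List.mem_singleton.mpr rfl)
      (by rw [g]; exact h9) (by simp [okConsI]))
      (by rw [g]; exact h2n 1 (by decide)) (by simp [okConsI, a10]))
      (by rw [g]; exact h2n 2 (by decide)) (by simp [okConsI, a21, f20]))
      (by rw [g]; exact h2n 3 (by decide)) (by simp [okConsI, a32, f31, f30]))
      (by rw [g]; exact h2n 4 (by decide)) (by simp [okConsI, a43, f42, f41, f40]))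
      (by rw [g]; exact h2n 5 (by decide)) (by simp [okConsI, a54, f53, f52, f51, f50])
  rw [buildIA] at hb
  exact absurd hb List.not_mem_nil

lemma partB :
    (¬ ∃ v : Fin 6 → (Fin 16 → ℤ),
        (∀ i, v i ∈ W6classes) ∧
        (∀ i : Fin 6, F16 (v i) (v i) = ![(-2 : ℤ), -8, -2, -2, -2, -3] i) ∧
        (∀ i : Fin 5, F16 (v i.castSucc) (v i.succ) = 1) ∧
        (∀ i j : Fin 6, ((i : ℕ) + 2 ≤ (j : ℕ) ∨ (j : ℕ) + 2 ≤ (i : ℕ)) →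
          F16 (v i) (v j) = 0)) := by
  rintro ⟨v, hmem, h2, hadj, hfar⟩
  choose a ha using fun i => mem_tvf (hmem i)
  have g : ∀ i j : Fin 6, Gm (a i) (a j) = F16 (v i) (v j) := by
    intro i j; rw [ha i, ha j, GmF]
  have adj : ∀ k : Fin 5, Gm (a k.succ) (a k.castSucc) = 1 := by
    intro k; rw [g, F16_comm]; exact hadj k
  have far : ∀ i j : Fin 6, ((j : ℕ) + 2 ≤ (i : ℕ)) → Gm (a i) (a j) = 0 := by
    intro i j h; rw [g]; exact hfar i j (Or.inr h)
  have a10 : Gm (a 1) (a 0) = 1 := adj 0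
  have a21 : Gm (a 2) (a 1) = 1 := adj 1
  have a32 : Gm (a 3) (a 2) = 1 := adj 2
  have a43 : Gm (a 4) (a 3) = 1 := adj 3
  have a54 : Gm (a 5) (a 4) = 1 := adj 4
  have f20 : Gm (a 2) (a 0) = 0 := far 2 0 (by decide)
  have f30 : Gm (a 3) (a 0) = 0 := far 3 0 (by decide)
  have f31 : Gm (a 3) (a 1) = 0 := far 3 1 (by decide)
  have f40 : Gm (a 4) (a 0) = 0 := far 4 0 (by decide)
  have f41 : Gm (a 4) (a 1) = 0 := far 4 1 (by decide)
  have f42 : Gm (a 4) (a 2) = 0 := far 4 2 (by decide)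
  have f50 : Gm (a 5) (a 0) = 0 := far 5 0 (by decide)
  have f51 : Gm (a 5) (a 1) = 0 := far 5 1 (by decide)
  have f52 : Gm (a 5) (a 2) = 0 := far 5 2 (by decide)
  have f53 : Gm (a 5) (a 3) = 0 := far 5 3 (by decide)
  have hb : [a 5, a 4, a 3, a 2, a 1, a 0] ∈ buildI [-2,-8,-2,-2,-2,-3] := by
    show [a 5, a 4, a 3, a 2, a 1, a 0] ∈
      stepI (-3) (stepI (-2) (stepI (-2) (stepI (-2) (stepI (-8) (stepI (-2) [[]])))))
    refine mem_stepI (mem_stepI (mem_stepI (mem_stepI (mem_stepI (mem_stepI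
      (List.mem_singleton.mpr rfl)
      (by rw [g]; simpa using h2 0) (by simp [okConsI]))
      (by rw [g]; simpa using h2 1) (by simp [okConsI, a10]))
      (by rw [g]; simpa using h2 2) (by simp [okConsI, a21, f20]))
      (by rw [g]; simpa using h2 3) (by simp [okConsI, a32, f31, f30]))
      (by rw [g]; simpa using h2 4) (by simp [okConsI, a43, f42, f41, f40]))
      (by rw [g]; simpa using h2 5) (by simp [okConsI, a54, f53, f52, f51, f50])
  rw [buildIB] at hb
  exact absurd hb List.not_mem_nil

/-- No chain of classes in `T` realizes the intersection pattern of the linear plumbings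
`(−9,−2,−2,−2,−2,−2)` or `(−2,−8,−2,−2,−2,−3)`. -/
theorem stmt_11 :
    (¬ ∃ v : Fin 6 → (Fin 16 → ℤ),
        (∀ i, v i ∈ W6classes) ∧
        F16 (v 0) (v 0) = -9 ∧
        (∀ i : Fin 6, i ≠ 0 → F16 (v i) (v i) = -2) ∧
        (∀ i : Fin 5, F16 (v i.castSucc) (v i.succ) = 1) ∧
        (∀ i j : Fin 6, ((i : ℕ) + 2 ≤ (j : ℕ) ∨ (j : ℕ) + 2 ≤ (i : ℕ)) →
          F16 (v i) (v j) = 0)) ∧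
    (¬ ∃ v : Fin 6 → (Fin 16 → ℤ),
        (∀ i, v i ∈ W6classes) ∧
        (∀ i : Fin 6, F16 (v i) (v i) = ![(-2 : ℤ), -8, -2, -2, -2, -3] i) ∧
        (∀ i : Fin 5, F16 (v i.castSucc) (v i.succ) = 1) ∧
        (∀ i j : Fin 6, ((i : ℕ) + 2 ≤ (j : ℕ) ∨ (j : ℕ) + 2 ≤ (i : ℕ)) →
          F16 (v i) (v j) = 0)) := by
  exact ⟨partA, partB⟩
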